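/- arXiv:1103.1030 — 4 statements merged into one kernel-verified Lean document; each statement's English description precedes it below -/
import Mathlib

section
/- Let F = ⋃_{j ≥ 2} [2^j, 2^j + 1] ⊆ ℝ and define v : ℝ² → ℝ by v(x,y) = χ_F(x). Then v is not quasi-nearly subharmonic on ℝ²: there is no constant C > 0 such that v(a) ≤ (C/m(B(a,r))) ∫_{B(a,r)} v dm for all a ∈ ℝ² and all r > 0. -/
open MeasureTheory Metric

lemma coord_dist_le (x y : EuclideanSpace ℝ (Fin 2)) (i : Fin 2) :
    dist (x i) (y i) ≤ dist x y := by
  rw [EuclideanSpace.dist_eq]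
  calc dist (x i) (y i) = Real.sqrt (dist (x i) (y i) ^ 2) := (Real.sqrt_sq dist_nonneg).symm
    _ ≤ _ := Real.sqrt_le_sqrt (Finset.single_le_sum
        (f := fun i => dist (x i) (y i) ^ 2) (fun i _ => sq_nonneg _) (Finset.mem_univ i))

lemma volume_box (A B : Set ℝ) (hA : MeasurableSet A) (hB : MeasurableSet B) :
    volume {x : EuclideanSpace ℝ (Fin 2) | x 0 ∈ A ∧ x 1 ∈ B} = volume A * volume B := by
  have hmp := PiLp.volume_preserving_ofLp (Fin 2)
  have hset : {x : EuclideanSpace ℝ (Fin 2) | x 0 ∈ A ∧ x 1 ∈ B}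
      = (@WithLp.ofLp 2 (Fin 2 → ℝ)) ⁻¹' (Set.univ.pi ![A, B]) := by
    ext x
    simp [Set.mem_pi, Fin.forall_fin_two]
  have hm : MeasurableSet (Set.univ.pi ![A, B]) :=
    MeasurableSet.univ_pi (fun i => by fin_cases i <;> assumption)
  rw [hset, hmp.measure_preimage hm.nullMeasurableSet, volume_pi_pi]
  simp [Fin.prod_univ_two]

/-- with `F = ⋃_{j≥2} [2^j, 2^j+1]`, the function
`v(x,y) = χ_F(x)` is not quasi-nearly subharmonic on `ℝ²`. -/
theorem indicator_union_not_qns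
    (F : Set ℝ) (hF : F = ⋃ j : ℕ, ⋃ (_ : 2 ≤ j), Set.Icc ((2 : ℝ) ^ j) (2 ^ j + 1))
    (v : EuclideanSpace ℝ (Fin 2) → ℝ)
    (hv : ∀ x, v x = F.indicator (fun _ => (1 : ℝ)) (x 0)) :
    ¬ ∃ C : ℝ, 0 < C ∧ ∀ (a : EuclideanSpace ℝ (Fin 2)) (r : ℝ), 0 < r →
      v a ≤ (C / (volume (ball a r)).toReal) * ∫ x in ball a r, v x := by
  rintro ⟨C, hC, h⟩
  -- F is measurable
  have hFm : MeasurableSet F := by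
    rw [hF]
    exact MeasurableSet.iUnion fun j => MeasurableSet.iUnion fun _ => measurableSet_Icc
  -- choose n with 2*C < 2^n
  obtain ⟨n, hn⟩ : ∃ n : ℕ, 2 * C < 2 ^ n := pow_unbounded_of_one_lt (2 * C) one_lt_two
  set r : ℝ := 2 ^ (n + 2) with hr_def
  have hr0 : (0 : ℝ) < r := by positivity
  -- the center point
  set a : EuclideanSpace ℝ (Fin 2) := (WithLp.equiv 2 (Fin 2 → ℝ)).symm ![2 ^ (n + 3), 0]
    with ha_def
  have ha0 : a 0 = 2 ^ (n + 3) := rfl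
  have ha1 : a 1 = 0 := rfl
  -- v a = 1
  have hva : v a = 1 := by
    rw [hv a, ha0, Set.indicator_of_mem]
    rw [hF]
    exact Set.mem_iUnion.2 ⟨n + 3, Set.mem_iUnion.2 ⟨by omega,
      ⟨le_refl _, by linarith⟩⟩⟩
  -- the set S
  set S : Set (EuclideanSpace ℝ (Fin 2)) := (fun x => x 0) ⁻¹' F with hS_def
  have hmeas0 : Measurable fun x : EuclideanSpace ℝ (Fin 2) => x 0 :=
    (EuclideanSpace.proj (0 : Fin 2)).continuous.measurable
  have hSm : MeasurableSet S := hmeas0 hFm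
  -- rewrite v as an indicator
  have hvS : ∀ x, v x = S.indicator (fun _ => (1 : ℝ)) x := by
    intro x
    rw [hv x]
    by_cases hx : x 0 ∈ F
    · rw [Set.indicator_of_mem hx, Set.indicator_of_mem (a := x) hx]
    · rw [Set.indicator_of_notMem hx, Set.indicator_of_notMem (a := x) hx]
  -- the integral equals the measure of the intersection
  have hint : ∫ x in ball a r, v x = (volume (ball a r ∩ S)).toReal := by
    calc ∫ x in ball a r, v x = ∫ x in ball a r, S.indicator (fun _ => (1 : ℝ)) x := by
          simp_rw [hvS]
      _ = ∫ x in ball a r ∩ S, (1 : ℝ) := setIntegral_indicator hSm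
      _ = (volume (ball a r ∩ S)).toReal • (1 : ℝ) := setIntegral_const 1
      _ = (volume (ball a r ∩ S)).toReal := by rw [smul_eq_mul, mul_one]
  -- the two boxes
  set P1 : Set (EuclideanSpace ℝ (Fin 2)) :=
    {x | x 0 ∈ Set.Icc ((2 : ℝ) ^ (n + 2)) (2 ^ (n + 2) + 1) ∧ x 1 ∈ Set.Ioo (-r) r} with hP1
  set P2 : Set (EuclideanSpace ℝ (Fin 2)) :=
    {x | x 0 ∈ Set.Icc ((2 : ℝ) ^ (n + 3)) (2 ^ (n + 3) + 1) ∧ x 1 ∈ Set.Ioo (-r) r} with hP2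
  have hsub : ball a r ∩ S ⊆ P1 ∪ P2 := by
    rintro x ⟨hxb, hxS⟩
    have hd0 : |x 0 - a 0| < r := by
      have := coord_dist_le x a 0
      rw [Real.dist_eq] at this
      exact lt_of_le_of_lt this (mem_ball.1 hxb)
    have hd1 : |x 1 - a 1| < r := by
      have := coord_dist_le x a 1
      rw [Real.dist_eq] at this
      exact lt_of_le_of_lt this (mem_ball.1 hxb)
    rw [ha0] at hd0
    rw [ha1, sub_zero] at hd1
    have hx1 : x 1 ∈ Set.Ioo (-r) r := abs_lt.1 hd1
    have hx0l : (2 : ℝ) ^ (n + 2) < x 0 := by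
      have := abs_lt.1 hd0
      have h2 : (2 : ℝ) ^ (n + 3) = 2 * 2 ^ (n + 2) := by ring
      rw [hr_def] at this; nlinarith [this.1]
    have hx0r : x 0 < 3 * 2 ^ (n + 2) := by
      have := abs_lt.1 hd0
      have h2 : (2 : ℝ) ^ (n + 3) = 2 * 2 ^ (n + 2) := by ring
      rw [hr_def] at this; nlinarith [this.2]
    rw [hS_def, Set.mem_preimage, hF] at hxS
    obtain ⟨k, hkmem⟩ := Set.mem_iUnion.1 hxS
    obtain ⟨hk2, hkIcc⟩ := Set.mem_iUnion.1 hkmem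
    obtain ⟨hkl, hkr⟩ := hkIcc
    -- k ≤ n + 3
    have hkle : k ≤ n + 3 := by
      by_contra hlt
      push_neg at hlt
      have : (2 : ℝ) ^ (n + 4) ≤ 2 ^ k := by
        apply pow_le_pow_right₀ (by norm_num) (by omega)
      have h4 : (2 : ℝ) ^ (n + 4) = 4 * 2 ^ (n + 2) := by ring
      nlinarith
    -- k ≥ n + 2
    have hkge : n + 2 ≤ k := by
      by_contra hlt
      push_neg at hlt
      have h1 : (2 : ℝ) ^ k ≤ 2 ^ (n + 1) := by
        apply pow_le_pow_right₀ (by norm_num) (by omega)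
      have h2 : (1 : ℝ) ≤ 2 ^ (n + 1) := one_le_pow₀ (by norm_num)
      have h3 : (2 : ℝ) ^ (n + 2) = 2 ^ (n + 1) + 2 ^ (n + 1) := by ring
      nlinarith
    have : k = n + 2 ∨ k = n + 3 := by omega
    rcases this with hk | hk
    · left; exact ⟨by rw [hk] at hkl hkr; exact ⟨hkl, hkr⟩, hx1⟩
    · right; exact ⟨by rw [hk] at hkl hkr; exact ⟨hkl, hkr⟩, hx1⟩
  -- volume of the boxes
  have hvolP1 : volume P1 = ENNReal.ofReal (2 * r) := by
    rw [hP1, volume_box _ _ measurableSet_Icc measurableSet_Ioo,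
      Real.volume_Icc, Real.volume_Ioo]
    rw [show (2 : ℝ) ^ (n + 2) + 1 - 2 ^ (n + 2) = 1 by ring, ENNReal.ofReal_one, one_mul]
    congr 1; ring
  have hvolP2 : volume P2 = ENNReal.ofReal (2 * r) := by
    rw [hP2, volume_box _ _ measurableSet_Icc measurableSet_Ioo,
      Real.volume_Icc, Real.volume_Ioo]
    rw [show (2 : ℝ) ^ (n + 3) + 1 - 2 ^ (n + 3) = 1 by ring, ENNReal.ofReal_one, one_mul]
    congr 1; ring
  have hvol_le : volume (ball a r ∩ S) ≤ ENNReal.ofReal (4 * r) := by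
    calc volume (ball a r ∩ S) ≤ volume (P1 ∪ P2) := measure_mono hsub
      _ ≤ volume P1 + volume P2 := measure_union_le _ _
      _ = ENNReal.ofReal (2 * r) + ENNReal.ofReal (2 * r) := by rw [hvolP1, hvolP2]
      _ = ENNReal.ofReal (4 * r) := by
          rw [← ENNReal.ofReal_add (by positivity) (by positivity)]; congr 1; ring
  have hI_le : ∫ x in ball a r, v x ≤ 4 * r := by
    rw [hint]
    calc (volume (ball a r ∩ S)).toReal ≤ (ENNReal.ofReal (4 * r)).toReal :=
        ENNReal.toReal_mono ENNReal.ofReal_ne_top hvol_le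
      _ = 4 * r := ENNReal.toReal_ofReal (by positivity)
  -- volume of the ball
  have hvb : (volume (ball a r)).toReal = Real.pi * r ^ 2 := by
    rw [EuclideanSpace.volume_ball]
    rw [show (Fintype.card (Fin 2)) = 2 from by simp]
    rw [show ((2 : ℕ) : ℝ) / 2 + 1 = 2 by norm_num, Real.Gamma_two,
      Real.sq_sqrt Real.pi_nonneg, div_one]
    rw [ENNReal.toReal_mul, ENNReal.toReal_pow, ENNReal.toReal_ofReal hr0.le,
      ENNReal.toReal_ofReal Real.pi_nonneg]
    ring
  -- conclude
  have hb := h a r hr0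
  rw [hva, hvb] at hb
  have hInn : (0 : ℝ) ≤ C / (Real.pi * r ^ 2) := by positivity
  have hb2 : (1 : ℝ) ≤ C / (Real.pi * r ^ 2) * (4 * r) :=
    hb.trans (mul_le_mul_of_nonneg_left hI_le hInn)
  have heq : C / (Real.pi * r ^ 2) * (4 * r) = 4 * C / (Real.pi * r) := by
    field_simp
  rw [heq, one_le_div (by positivity)] at hb2
  have hrn : r = 4 * 2 ^ n := by rw [hr_def]; ring
  nlinarith [Real.pi_gt_three, hn, hC, hr0, hb2, hrn]
end

section
/- Let E = ⋃_{j ≥ 2} [exp(2^j), exp(2^j + 1)] ⊆ (0,∞) and define u on Ω' = ℝ² \ {0} by u(w) = χ_E(|w|). Then u is quasi-nearly subharmonic on Ω': there exists a constant C > 0 such that u(a) ≤ (C/m(B(a,r))) ∫_{B(a,r)} u dm whenever the closed disk B̄(a,r) ⊆ Ω'. -/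
open MeasureTheory Metric

/-- with `E = ⋃_{j≥2} [exp(2^j), exp(2^j+1)]`, the function
`u(w) = χ_E(|w|)` is quasi-nearly subharmonic on `ℝ² \ {0}`. -/
theorem radial_indicator_qns
    (E : Set ℝ)
    (hE : E = ⋃ j : ℕ, ⋃ (_ : 2 ≤ j),
      Set.Icc (Real.exp ((2 : ℝ) ^ j)) (Real.exp ((2 : ℝ) ^ j + 1)))
    (u : EuclideanSpace ℝ (Fin 2) → ℝ)
    (hu : ∀ w, u w = E.indicator (fun _ => (1 : ℝ)) ‖w‖) :
    ∃ C : ℝ, 0 < C ∧ ∀ (a : EuclideanSpace ℝ (Fin 2)) (r : ℝ), 0 < r →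
      closedBall a r ⊆ ({0}ᶜ : Set (EuclideanSpace ℝ (Fin 2))) →
      u a ≤ (C / (volume (ball a r)).toReal) * ∫ x in ball a r, u x := by
  have hEmeas : MeasurableSet E := by
    rw [hE]
    exact MeasurableSet.iUnion fun j => MeasurableSet.iUnion fun _ => measurableSet_Icc
  have hA : MeasurableSet {w : EuclideanSpace ℝ (Fin 2) | ‖w‖ ∈ E} :=
    measurable_norm hEmeas
  have huEq : u = Set.indicator {w : EuclideanSpace ℝ (Fin 2) | ‖w‖ ∈ E}
      (fun _ => (1 : ℝ)) := by
    funext w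
    rw [hu]
    by_cases h : ‖w‖ ∈ E <;> simp [Set.indicator, h]
  have hnn : ∀ x, 0 ≤ u x := by
    intro x; rw [huEq]; exact Set.indicator_nonneg (fun _ _ => zero_le_one) x
  refine ⟨64, by norm_num, fun a r hr hsub => ?_⟩
  -- volume facts
  have hB0 : (0 : ℝ) < (volume (ball (0 : EuclideanSpace ℝ (Fin 2)) 1)).toReal :=
    ENNReal.toReal_pos (measure_ball_pos volume 0 one_pos).ne' measure_ball_lt_top.ne
  set B : ℝ := (volume (ball (0 : EuclideanSpace ℝ (Fin 2)) 1)).toReal with hBdef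
  have hvol : ∀ (c : EuclideanSpace ℝ (Fin 2)) (s : ℝ), 0 ≤ s →
      (volume (ball c s)).toReal = s ^ 2 * B := by
    intro c s hs
    rw [Measure.addHaar_ball volume c hs]
    rw [ENNReal.toReal_mul, ENNReal.toReal_ofReal (by positivity)]
    simp [finrank_euclideanSpace_fin, hBdef]
  have hintnn : (0 : ℝ) ≤ ∫ x in ball a r, u x :=
    setIntegral_nonneg measurableSet_ball fun x _ => hnn x
  have hra : r < ‖a‖ := by
    by_contra h
    push_neg at h
    have h0 : (0 : EuclideanSpace ℝ (Fin 2)) ∈ closedBall a r := by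
      simpa [mem_closedBall, dist_comm, dist_zero_right] using h
    exact hsub h0 rfl
  by_cases hma : ‖a‖ ∈ E
  · -- main case
    rw [hE] at hma
    simp only [Set.mem_iUnion, Set.mem_Icc]  at hma
    obtain ⟨j, hj2, hL, hR⟩ := hma
    set L : ℝ := Real.exp ((2 : ℝ) ^ j) with hLdef
    set R : ℝ := Real.exp ((2 : ℝ) ^ j + 1) with hRdef
    have hRL : R = L * Real.exp 1 := by rw [hRdef, hLdef, Real.exp_add]
    have he2 : (2 : ℝ) ≤ Real.exp 1 := le_of_lt (lt_trans (by norm_num) Real.exp_one_gt_d9)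
    have hL0 : 0 < L := Real.exp_pos _
    have hgap : ‖a‖ / 2 ≤ R - L := by
      rw [hRL]
      nlinarith [hR, hRL, hL0]
    -- choose t
    obtain ⟨t, ht0, htd, htl, htr⟩ :
        ∃ t : ℝ, 0 < t ∧ |t - ‖a‖| ≤ r / 8 ∧ L ≤ t - r / 8 ∧ t + r / 8 ≤ R := by
      by_cases hcase : ‖a‖ + r / 4 ≤ R
      · refine ⟨‖a‖ + r / 8, by linarith, by rw [abs_of_nonneg] <;> linarith,
          by linarith, by linarith⟩
      · push_neg at hcase
        refine ⟨‖a‖ - r / 8, by linarith, by rw [abs_of_nonpos] <;> linarith,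
          by linarith, by linarith⟩
    have hna : (0 : ℝ) < ‖a‖ := lt_trans hr hra
    set a' : EuclideanSpace ℝ (Fin 2) := (t / ‖a‖) • a with ha'def
    have hna' : ‖a'‖ = t := by
      rw [ha'def, norm_smul, Real.norm_eq_abs, abs_of_nonneg (by positivity),
        div_mul_cancel₀]
      exact hna.ne'
    have hda' : dist a' a ≤ r / 8 := by
      rw [dist_eq_norm]
      have : a' - a = (t / ‖a‖ - 1) • a := by
        rw [ha'def, sub_smul, one_smul]
      rw [this, norm_smul, Real.norm_eq_abs]
      have : |t / ‖a‖ - 1| * ‖a‖ = |t - ‖a‖| := by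
        rw [← abs_of_pos hna, ← abs_mul]
        congr 1
        field_simp
        rw [abs_of_pos hna]; ring
      rw [this]
      exact htd
    have hball : ball a' (r / 8) ⊆ ball a r := by
      intro x hx
      rw [mem_ball] at hx ⊢
      calc dist x a ≤ dist x a' + dist a' a := dist_triangle _ _ _
        _ < r / 8 + r / 8 := by linarith [hda']
        _ ≤ r := by linarith
    have hin : ∀ x ∈ ball a' (r / 8), ‖x‖ ∈ E := by
      intro x hx
      rw [mem_ball, dist_eq_norm] at hx
      have h1 : |‖x‖ - t| ≤ ‖x - a'‖ := by
        rw [← hna']; exact abs_norm_sub_norm_le _ _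
      have h2 : L ≤ ‖x‖ ∧ ‖x‖ ≤ R := by
        rw [abs_le] at h1
        constructor <;> linarith [h1.1, h1.2]
      rw [hE]
      simp only [Set.mem_iUnion, Set.mem_Icc]
      exact ⟨j, hj2, h2.1, h2.2⟩
    -- u a = 1
    have hua : u a = 1 := by
      rw [hu, Set.indicator_of_mem]
      rw [hE]
      simp only [Set.mem_iUnion, Set.mem_Icc]
      exact ⟨j, hj2, hL, hR⟩
    -- integral lower bound
    have hint : IntegrableOn u (ball a r) volume := by
      rw [huEq]
      exact (integrableOn_const measure_ball_lt_top.ne).indicator hA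
    have hlowint : IntegrableOn ((ball a' (r / 8)).indicator (fun _ => (1 : ℝ)))
        (ball a r) volume :=
      (integrableOn_const measure_ball_lt_top.ne).indicator measurableSet_ball
    have hmono : ∀ x ∈ ball a r,
        (ball a' (r / 8)).indicator (fun _ => (1 : ℝ)) x ≤ u x := by
      intro x _
      by_cases hx : x ∈ ball a' (r / 8)
      · rw [Set.indicator_of_mem hx, hu, Set.indicator_of_mem (hin x hx)]
      · rw [Set.indicator_of_notMem hx]
        exact hnn x
    have hint1 : ∫ x in ball a r, (ball a' (r / 8)).indicator (fun _ => (1 : ℝ)) x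
        = (volume (ball a' (r / 8))).toReal := by
      rw [setIntegral_indicator measurableSet_ball,
        Set.inter_eq_self_of_subset_right hball, setIntegral_const, smul_eq_mul, mul_one]
      rfl
    have hge : (volume (ball a' (r / 8))).toReal ≤ ∫ x in ball a r, u x := by
      rw [← hint1]
      exact setIntegral_mono_on hlowint hint measurableSet_ball hmono
    rw [hvol a' (r / 8) (by positivity)] at hge
    rw [hua, hvol a r hr.le]
    have hpos : (0 : ℝ) < 64 / (r ^ 2 * B) := by positivity
    calc (1 : ℝ) = 64 / (r ^ 2 * B) * ((r / 8) ^ 2 * B) := by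
          field_simp; ring
      _ ≤ 64 / (r ^ 2 * B) * ∫ x in ball a r, u x :=
          mul_le_mul_of_nonneg_left hge hpos.le
  · -- u a = 0
    rw [hu, Set.indicator_of_notMem hma]
    exact mul_nonneg (by positivity) hintnn
end

section
/- Let y ∈ ℝⁿ, r > 0, and y₀ ∈ ℝⁿ with |y₀ − y| = 2r. Set G' = ℝⁿ \ {y₀} and u = χ_{B̄(y,r)} (the indicator of the closed ball). Then u is 3ⁿ-quasi-nearly subharmonic on G': for every a ∈ G' and every s > 0 with B̄(a,s) ⊆ G', u(a) ≤ (3ⁿ/m(B(a,s))) ∫_{B(a,s)} u dm. -/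
open MeasureTheory Metric

/-- the indicator of the closed ball `B̄(y,r)` is `3ⁿ`-qns on
`ℝⁿ \ {y₀}` when `|y₀ − y| = 2r`. -/
theorem closedBall_indicator_qns_pow_three {n : ℕ}
    (y y₀ : EuclideanSpace ℝ (Fin n)) (r : ℝ) (hr : 0 < r)
    (hy₀ : dist y₀ y = 2 * r)
    (u : EuclideanSpace ℝ (Fin n) → ℝ)
    (hu : ∀ x, u x = (closedBall y r).indicator (fun _ => (1 : ℝ)) x) :
    ∀ (a : EuclideanSpace ℝ (Fin n)) (s : ℝ), 0 < s →
      a ∈ ({y₀}ᶜ : Set (EuclideanSpace ℝ (Fin n))) →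
      closedBall a s ⊆ ({y₀}ᶜ : Set (EuclideanSpace ℝ (Fin n))) →
      u a ≤ ((3 : ℝ) ^ n / (volume (ball a s)).toReal) * ∫ x in ball a s, u x := by
  intro a s hs ha hsub
  have hMeas : MeasurableSet (closedBall y r) := measurableSet_closedBall
  have hVpos : (0 : ENNReal) < volume (ball a s) := measure_ball_pos _ _ hs
  have hVne : volume (ball a s) ≠ ⊤ := measure_ball_lt_top.ne
  have hVpos' : 0 < (volume (ball a s)).toReal := ENNReal.toReal_pos hVpos.ne' hVne
  set V := (volume (ball a s)).toReal with hV
  have hint : ∫ x in ball a s, u x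
      = (volume (ball a s ∩ closedBall y r)).toReal := by
    calc ∫ x in ball a s, u x
        = ∫ x in ball a s, (closedBall y r).indicator (fun _ => (1 : ℝ)) x := by
          simp_rw [hu]
      _ = ∫ _x in ball a s ∩ closedBall y r, (1 : ℝ) :=
          setIntegral_indicator hMeas
      _ = (volume (ball a s ∩ closedBall y r)).toReal := by
          simp [measureReal_def]
  rw [hint]
  set W := (volume (ball a s ∩ closedBall y r)).toReal with hW
  have hW0 : 0 ≤ W := ENNReal.toReal_nonneg
  have h3 : (0 : ℝ) < 3 ^ n := by positivity
  by_cases hay : a ∈ closedBall y r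
  · -- main case
    have hua : u a = 1 := by rw [hu]; simp [hay]
    rw [hua]
    set d := dist a y with hd
    have hdr : d ≤ r := mem_closedBall.mp hay
    have hd0 : 0 ≤ d := dist_nonneg
    have hy0 : y₀ ∉ closedBall a s := fun h => hsub h rfl
    have hsda : s < dist y₀ a := by
      by_contra h
      push_neg at h
      exact hy0 (mem_closedBall.mpr h)
    have hs3r : s < 2 * r + d := by
      calc s < dist y₀ a := hsda
        _ ≤ dist y₀ y + dist y a := dist_triangle _ _ _
        _ = 2 * r + d := by rw [hy₀, dist_comm y a]
    have hsr3 : s / 3 < r := by linarith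
    set T := min d (r - s / 3) with hT
    have hT0 : 0 ≤ T := le_min hd0 (by linarith)
    have hTd : T ≤ d := min_le_left _ _
    have hdT : d - T ≤ s / 3 := by
      rcases le_total d (r - s / 3) with h | h
      · rw [hT, min_eq_left h]; linarith
      · rw [hT, min_eq_right h]; linarith
    set t := (d - T) / d with ht
    set c := AffineMap.lineMap (k := ℝ) a y t with hc
    have hca : dist c a = d - T := by
      rcases eq_or_lt_of_le hd0 with h0 | h0
      · have hd0' : d = 0 := h0.symm
        have hT0' : T = 0 := le_antisymm (hTd.trans_eq hd0') hT0
        have ht0 : t = 0 := by simp [ht, hd0']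
        simp [hc, ht0, hd0', hT0']
      · have ht0 : 0 ≤ t := div_nonneg (by linarith) hd0
        rw [hc, dist_lineMap_left, Real.norm_eq_abs, abs_of_nonneg ht0, ht, ← hd]
        field_simp
    have hcy : dist c y = T := by
      rcases eq_or_lt_of_le hd0 with h0 | h0
      · have hd0' : d = 0 := h0.symm
        have hT0' : T = 0 := le_antisymm (hTd.trans_eq hd0') hT0
        have ht0 : t = 0 := by simp [ht, hd0']
        have hay' : a = y := by rwa [← dist_eq_zero, ← hd]
        simp [hc, ht0, hay', hT0']
      · have ht1 : t ≤ 1 := by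
          rw [ht, div_le_one h0]; linarith
        rw [hc, dist_lineMap_right, Real.norm_eq_abs, abs_of_nonneg (by linarith), ← hd, ht]
        field_simp
        ring
    have hsub1 : ball c (s / 3) ⊆ ball a s := by
      intro x hx
      rw [mem_ball] at hx ⊢
      calc dist x a ≤ dist x c + dist c a := dist_triangle _ _ _
        _ < s / 3 + (d - T) := by linarith
        _ ≤ s := by linarith
    have hsub2 : ball c (s / 3) ⊆ closedBall y r := by
      intro x hx
      rw [mem_ball] at hx
      rw [mem_closedBall]
      have hTr : T ≤ r - s / 3 := min_le_right _ _
      calc dist x y ≤ dist x c + dist c y := dist_triangle _ _ _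
        _ ≤ s / 3 + T := by linarith
        _ ≤ r := by linarith
    have hsub3 : ball c (s / 3) ⊆ ball a s ∩ closedBall y r :=
      Set.subset_inter hsub1 hsub2
    -- volume estimate
    have hVc : V ≤ 3 ^ n * W := by
      rcases Nat.eq_zero_or_pos n with hn | hn
      · -- trivial dimension: closedBall y r = univ
        subst hn
        have : ball a s ∩ closedBall y r = ball a s := by
          apply Set.inter_eq_left.mpr
          intro x _
          rw [mem_closedBall]
          have : dist x y = 0 := by
            rw [dist_eq_zero]; exact Subsingleton.elim x y
          linarith
        rw [hW, this, pow_zero, one_mul, hV]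
      · have : Nontrivial (EuclideanSpace ℝ (Fin n)) := by
          apply Module.nontrivial_of_finrank_pos (R := ℝ)
          rw [finrank_euclideanSpace_fin]
          exact hn
        have hB1 : volume (ball a s)
            = ENNReal.ofReal (s ^ n) * volume (ball (0 : EuclideanSpace ℝ (Fin n)) 1) := by
          rw [Measure.addHaar_ball _ _ hs.le, finrank_euclideanSpace_fin]
        have hB2 : volume (ball c (s / 3))
            = ENNReal.ofReal ((s / 3) ^ n) * volume (ball (0 : EuclideanSpace ℝ (Fin n)) 1) := by
          rw [Measure.addHaar_ball _ _ (by linarith : (0:ℝ) ≤ s / 3), finrank_euclideanSpace_fin]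
        have hBne : volume (ball (0 : EuclideanSpace ℝ (Fin n)) 1) ≠ ⊤ :=
          measure_ball_lt_top.ne
        have hVeq : V = s ^ n * (volume (ball (0 : EuclideanSpace ℝ (Fin n)) 1)).toReal := by
          rw [hV, hB1, ENNReal.toReal_mul, ENNReal.toReal_ofReal (by positivity)]
        have hVceq : (volume (ball c (s / 3))).toReal
            = (s / 3) ^ n * (volume (ball (0 : EuclideanSpace ℝ (Fin n)) 1)).toReal := by
          rw [hB2, ENNReal.toReal_mul, ENNReal.toReal_ofReal (by positivity)]
        have hmono : (volume (ball c (s / 3))).toReal ≤ W := by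
          apply ENNReal.toReal_mono
          · exact ((measure_mono Set.inter_subset_left).trans_lt measure_ball_lt_top).ne
          · exact measure_mono hsub3
        have hpow : 3 ^ n * (s / 3) ^ n = s ^ n := by
          rw [← mul_pow]; ring_nf
        nlinarith [hmono, hVceq, hVeq,
          ENNReal.toReal_nonneg (a := volume (ball (0 : EuclideanSpace ℝ (Fin n)) 1))]
    rw [div_mul_eq_mul_div, le_div_iff₀ hVpos', one_mul]
    linarith
  · -- a outside the closed ball: u a = 0
    have : u a = 0 := by rw [hu]; simp [hay]
    rw [this]
    have : 0 ≤ (3 : ℝ) ^ n / V := by positivity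
    exact mul_nonneg this hW0
end

section
/- Let E = ⋃_{j ≥ 2} [exp(2^j), exp(2^j+1)] ⊆ (0,∞) and define v : ℂ \ {0} → ℝ by v(w) = ∫₀^{|w|} χ_E(t) dt. Then v ∘ exp is not regularly oscillating on ℂ: there is no constant C such that Lip(v∘exp)(z) ≤ C r⁻¹ sup_{ζ ∈ B(z,r)} |v(exp ζ) − v(exp z)| for all z ∈ ℂ and all r > 0. -/
open Metric Filter intervalIntegral
open scoped ENNReal Topology

/-- The pointwise (upper) Lipschitz constant, valued in `ℝ≥0∞`. -/
noncomputable def lipAt {α β : Type*} [PseudoMetricSpace α] [PseudoMetricSpace β]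
    (g : α → β) (x : α) : ℝ≥0∞ :=
  Filter.limsup (fun y => ENNReal.ofReal (dist (g y) (g x) / dist y x)) (𝓝[≠] x)

/-- with `E = ⋃_{j≥2} [exp(2^j), exp(2^j+1)]` and
`v(w) = ∫₀^{|w|} χ_E(t) dt`, the function `v ∘ exp` is not regularly oscillating on `ℂ`. -/
theorem v_comp_exp_not_regularly_oscillating
    (E : Set ℝ)
    (hE : E = ⋃ j : ℕ, ⋃ (_ : 2 ≤ j),
      Set.Icc (Real.exp ((2 : ℝ) ^ j)) (Real.exp ((2 : ℝ) ^ j + 1)))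
    (v : ℂ → ℝ)
    (hv : ∀ w, v w = ∫ t in (0 : ℝ)..‖w‖, E.indicator (fun _ => (1 : ℝ)) t) :
    ¬ ∃ C : ℝ, ∀ (z : ℂ) (r : ℝ), 0 < r →
      lipAt (fun ζ => v (Complex.exp ζ)) z ≤ ENNReal.ofReal
        (C * r⁻¹ * sSup ((fun ζ => |v (Complex.exp ζ) - v (Complex.exp z)|) ''
          ball z r)) := by
  rintro ⟨C, hC⟩
  -- basic facts about E and the indicator function
  have hEmeas : MeasurableSet E := by
    rw [hE]
    exact MeasurableSet.iUnion fun k =>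
      MeasurableSet.iUnion fun _ => measurableSet_Icc
  set f : ℝ → ℝ := E.indicator (fun _ => (1 : ℝ)) with hf
  have hf_nonneg : ∀ t, 0 ≤ f t := fun t =>
    Set.indicator_nonneg (fun _ _ => zero_le_one) t
  have hf_le : ∀ t, f t ≤ 1 := fun t =>
    Set.indicator_le' (fun _ _ => le_refl 1) (fun _ _ => zero_le_one) t
  have hint : ∀ a b : ℝ, IntervalIntegrable f MeasureTheory.volume a b := by
    intro a b
    refine IntervalIntegrable.mono_fun' (g := fun _ => (1 : ℝ))
      intervalIntegrable_const ?_ ?_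
    · exact (measurable_const.indicator hEmeas).aestronglyMeasurable
    · filter_upwards with t
      have := hf_nonneg t
      have := hf_le t
      simp only [Real.norm_eq_abs]
      rw [abs_of_nonneg (hf_nonneg t)]
      exact hf_le t
  set W : ℝ → ℝ := fun a => ∫ t in (0 : ℝ)..Real.exp a, f t with hW
  have hgW : ∀ ζ : ℂ, v (Complex.exp ζ) = W ζ.re := by
    intro ζ
    rw [hv, Complex.norm_exp]
  -- choice of the constants
  set C' : ℝ := max C 0 with hC'
  have hC'0 : 0 ≤ C' := le_max_right _ _
  set K : ℝ := 2 * Real.exp 1 * (C' + 1) with hK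
  have hKpos : 0 < K := by positivity
  obtain ⟨m, hm⟩ : ∃ m : ℕ, 3 * K + 3 ≤ (m : ℝ) := exists_nat_ge _
  set j : ℕ := m * 2 with hj
  have hm1 : (1 : ℝ) ≤ (m : ℝ) := by nlinarith
  have hj2 : 2 ≤ j := by
    have : 1 ≤ m := by exact_mod_cast hm1
    omega
  have h2j : (1 : ℝ) < (2 : ℝ) ^ j := by
    apply one_lt_pow₀ (by norm_num)
    omega
  have hKj : K * ((j : ℝ) + 1) < (2 : ℝ) ^ j := by
    have h2m : (m : ℝ) + 1 ≤ (2 : ℝ) ^ m := by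
      have h := Nat.lt_two_pow_self (n := m)
      have h' : m + 1 ≤ 2 ^ m := h
      exact_mod_cast h'
    have hj' : (2 : ℝ) ^ j = ((2 : ℝ) ^ m) ^ 2 := by rw [hj, pow_mul]
    have hcast : ((j : ℝ) : ℝ) = 2 * (m : ℝ) := by
      rw [hj]; push_cast; ring
    rw [hj', hcast]
    nlinarith [sq_nonneg ((m : ℝ) + 1), sq_nonneg ((2:ℝ)^m - (m+1))]
  -- the point and radius
  set x₀ : ℝ := (2 : ℝ) ^ j + 1 / 2 with hx₀
  set z : ℂ := (x₀ : ℂ) with hz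
  set r : ℝ := (2 : ℝ) ^ j / 2 with hr
  have hrpos : 0 < r := by positivity
  -- the increment of W near x₀
  have hWdiff : ∀ t : ℝ, |t - x₀| < 1 / 4 → W t - W x₀ = Real.exp t - Real.exp x₀ := by
    intro t ht
    have h1 : W t - W x₀ = ∫ s in Real.exp x₀..Real.exp t, f s :=
      intervalIntegral.integral_interval_sub_left (hint 0 (Real.exp t))
        (hint 0 (Real.exp x₀))
    have habs := abs_sub_lt_iff.mp ht
    rw [hx₀] at habs
    have htmem : t ∈ Set.Icc ((2:ℝ)^j) ((2:ℝ)^j + 1) :=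
      Set.mem_Icc.mpr ⟨by linarith [habs.1, habs.2], by linarith [habs.1, habs.2]⟩
    have hx₀mem : x₀ ∈ Set.Icc ((2:ℝ)^j) ((2:ℝ)^j + 1) :=
      Set.mem_Icc.mpr ⟨by rw [hx₀]; linarith, by rw [hx₀]; linarith⟩
    have hsub : Set.uIcc (Real.exp x₀) (Real.exp t) ⊆ E := by
      have h2 : Set.uIcc (Real.exp x₀) (Real.exp t) ⊆
          Set.Icc (Real.exp ((2:ℝ)^j)) (Real.exp ((2:ℝ)^j + 1)) := by
        apply Set.uIcc_subset_Icc
        · exact ⟨Real.exp_le_exp.mpr hx₀mem.1, Real.exp_le_exp.mpr hx₀mem.2⟩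
        · exact ⟨Real.exp_le_exp.mpr htmem.1, Real.exp_le_exp.mpr htmem.2⟩
      intro s hs
      rw [hE]
      exact Set.mem_iUnion.mpr ⟨j, Set.mem_iUnion.mpr ⟨hj2, h2 hs⟩⟩
    rw [h1]
    have : ∫ s in Real.exp x₀..Real.exp t, f s = ∫ s in Real.exp x₀..Real.exp t, (1:ℝ) := by
      apply intervalIntegral.integral_congr
      intro s hs
      exact Set.indicator_of_mem (hsub hs) _
    rw [this]
    simp
  -- Part 1 : lower bound on lipAt
  have hlip : ENNReal.ofReal (Real.exp x₀) ≤ lipAt (fun ζ => v (Complex.exp ζ)) z := by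
    set F : ℂ → ℝ≥0∞ := fun ζ => ENNReal.ofReal
      (dist (v (Complex.exp ζ)) (v (Complex.exp z)) / dist ζ z) with hF
    have hmap : Tendsto (fun t : ℝ => (t : ℂ)) (𝓝[≠] x₀) (𝓝[≠] z) := by
      apply tendsto_nhdsWithin_of_tendsto_nhds_of_eventually_within
      · exact (Complex.continuous_ofReal.tendsto x₀).mono_left nhdsWithin_le_nhds
      · filter_upwards [self_mem_nhdsWithin] with t ht
        simp only [Set.mem_compl_iff, Set.mem_singleton_iff] at ht ⊢
        exact fun h => ht (Complex.ofReal_injective h)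
    have hslope : Tendsto (fun t => (Real.exp t - Real.exp x₀) / (t - x₀))
        (𝓝[≠] x₀) (𝓝 (Real.exp x₀)) := by
      have h := (Real.hasDerivAt_exp x₀)
      rw [hasDerivAt_iff_tendsto_slope] at h
      refine h.congr fun t => ?_
      rw [slope_def_field]
    have hkey : Tendsto (fun t : ℝ => F ((t : ℂ))) (𝓝[≠] x₀)
        (𝓝 (ENNReal.ofReal (Real.exp x₀))) := by
      have h1 : Tendsto (fun t => ENNReal.ofReal
          (|(Real.exp t - Real.exp x₀) / (t - x₀)|)) (𝓝[≠] x₀)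
          (𝓝 (ENNReal.ofReal (Real.exp x₀))) := by
        have habs : Tendsto (fun t => |(Real.exp t - Real.exp x₀) / (t - x₀)|)
            (𝓝[≠] x₀) (𝓝 (Real.exp x₀)) := by
          have h := hslope.abs
          rwa [abs_of_nonneg (Real.exp_pos x₀).le] at h
        exact (ENNReal.continuous_ofReal.tendsto (Real.exp x₀)).comp habs
      refine Tendsto.congr' ?_ h1
      have hev : ∀ᶠ t in 𝓝[≠] x₀, |t - x₀| < 1 / 4 := by
        apply eventually_nhdsWithin_of_eventually_nhds
        have : Metric.ball x₀ (1/4) ∈ 𝓝 x₀ := Metric.ball_mem_nhds _ (by norm_num)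
        filter_upwards [this] with t ht
        rwa [Metric.mem_ball, Real.dist_eq] at ht
      filter_upwards [hev, self_mem_nhdsWithin] with t ht htne
      rw [hF]
      simp only
      rw [hgW, hgW, Real.dist_eq]
      have hd : dist ((t : ℂ)) z = |t - x₀| := by
        rw [hz, Complex.isometry_ofReal.dist_eq, Real.dist_eq]
      rw [hd, Complex.ofReal_re, hz, Complex.ofReal_re, hWdiff t ht, abs_div]
    have hNeBot : (𝓝[≠] (x₀ : ℝ)).NeBot := by infer_instance
    calc ENNReal.ofReal (Real.exp x₀) = limsup (fun t : ℝ => F ((t:ℂ))) (𝓝[≠] x₀) :=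
          (hkey.limsup_eq).symm
      _ = limsup F (map (fun t : ℝ => (t:ℂ)) (𝓝[≠] x₀)) :=
          Filter.limsup_comp F _ _
      _ ≤ limsup F (𝓝[≠] z) := limsup_le_limsup_of_le hmap
  -- Part 2 : upper bound on the oscillation
  set Mb : ℝ := ((j : ℝ) + 1) * Real.exp ((2:ℝ)^j + 1) with hMb
  have hMb0 : 0 ≤ Mb := by positivity
  have hWbounds : ∀ a : ℝ, a ≤ x₀ + r → 0 ≤ W a ∧ W a ≤ Mb := by
    intro a ha
    constructor
    · exact intervalIntegral.integral_nonneg (Real.exp_pos a).le fun u _ => hf_nonneg u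
    · set T := Real.exp a with hT
      have hT0 : 0 ≤ T := (Real.exp_pos a).le
      have hWa : W a = (MeasureTheory.volume (E ∩ Set.Ioc 0 T)).toReal := by
        have h0 : W a = ∫ t in Set.Ioc 0 T, f t := intervalIntegral.integral_of_le hT0
        rw [h0, hf, MeasureTheory.setIntegral_indicator hEmeas,
          MeasureTheory.setIntegral_const, smul_eq_mul, mul_one, Set.inter_comm, MeasureTheory.measureReal_def]
      have hTlt : T < Real.exp ((2:ℝ)^(j+1)) := by
        rw [hT]
        apply Real.exp_lt_exp.mpr
        have : x₀ + r < (2:ℝ)^(j+1) := by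
          rw [hx₀, hr, pow_succ]
          nlinarith
        linarith
      have hsubset : E ∩ Set.Ioc 0 T ⊆
          ⋃ k ∈ Finset.range (j+1), Set.Icc (Real.exp ((2:ℝ)^k)) (Real.exp ((2:ℝ)^k + 1)) := by
        rintro s ⟨hsE, hs0, hsT⟩
        rw [hE] at hsE
        obtain ⟨k, hk⟩ := Set.mem_iUnion.mp hsE
        obtain ⟨hk2, hks⟩ := Set.mem_iUnion.mp hk
        refine Set.mem_biUnion (show k ∈ Finset.range (j+1) from ?_) hks
        rw [Finset.mem_range]
        by_contra hkj
        push_neg at hkj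
        have h1 : (2:ℝ)^(j+1) ≤ (2:ℝ)^k := by
          apply pow_le_pow_right₀ (by norm_num) hkj
        have h2 : Real.exp ((2:ℝ)^(j+1)) ≤ Real.exp ((2:ℝ)^k) := Real.exp_le_exp.mpr h1
        have := hks.1
        linarith
      have hmeas : MeasureTheory.volume (E ∩ Set.Ioc 0 T) ≤ ENNReal.ofReal Mb := by
        calc MeasureTheory.volume (E ∩ Set.Ioc 0 T)
            ≤ MeasureTheory.volume (⋃ k ∈ Finset.range (j+1),
              Set.Icc (Real.exp ((2:ℝ)^k)) (Real.exp ((2:ℝ)^k + 1))) :=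
              MeasureTheory.measure_mono hsubset
          _ ≤ ∑ k ∈ Finset.range (j+1), MeasureTheory.volume
              (Set.Icc (Real.exp ((2:ℝ)^k)) (Real.exp ((2:ℝ)^k + 1))) :=
              MeasureTheory.measure_biUnion_finset_le _ _
          _ ≤ ∑ k ∈ Finset.range (j+1), ENNReal.ofReal (Real.exp ((2:ℝ)^j + 1)) := by
              apply Finset.sum_le_sum
              intro k hk
              rw [Real.volume_Icc]
              apply ENNReal.ofReal_le_ofReal
              have h1 : (2:ℝ)^k ≤ (2:ℝ)^j :=
                pow_le_pow_right₀ (by norm_num) (by simpa using Finset.mem_range_succ_iff.mp hk)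
              have h2 : Real.exp ((2:ℝ)^k + 1) ≤ Real.exp ((2:ℝ)^j + 1) :=
                Real.exp_le_exp.mpr (by linarith)
              have h3 : 0 < Real.exp ((2:ℝ)^k) := Real.exp_pos _
              linarith
          _ = ((j : ℕ) + 1 : ℕ) * ENNReal.ofReal (Real.exp ((2:ℝ)^j + 1)) := by
              rw [Finset.sum_const, Finset.card_range, nsmul_eq_mul]
          _ = ENNReal.ofReal Mb := by
              rw [hMb, ENNReal.ofReal_mul (by positivity)]
              congr 1
              · rw [← ENNReal.ofReal_natCast]
                congr 1
                push_cast
                ring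
      rw [hWa]
      exact ENNReal.toReal_le_of_le_ofReal hMb0 hmeas
  -- bound the sSup
  set S : ℝ := sSup ((fun ζ => |v (Complex.exp ζ) - v (Complex.exp z)|) '' ball z r) with hS
  have hball : ∀ ζ ∈ ball z r, |v (Complex.exp ζ) - v (Complex.exp z)| ≤ Mb := by
    intro ζ hζ
    rw [hgW, hgW]
    have hre : ζ.re ≤ x₀ + r := by
      have h1 : |ζ.re - x₀| ≤ dist ζ z := by
        have : ζ.re - x₀ = (ζ - z).re := by rw [hz]; simp
        rw [this, Complex.dist_eq]
        exact Complex.abs_re_le_norm _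
      have h2 : dist ζ z < r := mem_ball.mp hζ
      have := abs_sub_le_iff.mp (h1.trans h2.le)
      linarith [this.1]
    have h1 := hWbounds ζ.re hre
    have h2 := hWbounds x₀ (by linarith)
    have hzre : z.re = x₀ := by rw [hz]; simp
    rw [hzre]
    rw [abs_le]
    constructor <;> linarith [h1.1, h1.2, h2.1, h2.2]
  have hSle : S ≤ Mb := by
    apply Real.sSup_le _ hMb0
    rintro x ⟨ζ, hζ, rfl⟩
    exact hball ζ hζ
  have hS0 : 0 ≤ S := by
    have hmem : (0:ℝ) ∈ ((fun ζ => |v (Complex.exp ζ) - v (Complex.exp z)|) '' ball z r) :=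
      ⟨z, mem_ball_self hrpos, by simp⟩
    exact le_csSup ⟨Mb, by rintro x ⟨ζ, hζ, rfl⟩; exact hball ζ hζ⟩ hmem
  -- put everything together
  have h1 : ENNReal.ofReal (Real.exp x₀) ≤ ENNReal.ofReal (C * r⁻¹ * S) :=
    hlip.trans (hC z r hrpos)
  have h2 : Real.exp x₀ ≤ C * r⁻¹ * S := by
    rcases ENNReal.ofReal_le_ofReal_iff'.mp h1 with h | h
    · exact h
    · linarith [Real.exp_pos x₀]
  have h3 : C * r⁻¹ * S ≤ C' * r⁻¹ * Mb := by
    have hrinv : 0 ≤ r⁻¹ := inv_nonneg.mpr hrpos.le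
    have ha : C * r⁻¹ * S ≤ C' * r⁻¹ * S := by
      apply mul_le_mul_of_nonneg_right _ hS0
      exact mul_le_mul_of_nonneg_right (le_max_left _ _) hrinv
    refine ha.trans ?_
    exact mul_le_mul_of_nonneg_left hSle (by positivity)
  have h4 : Real.exp x₀ ≤ C' * r⁻¹ * Mb := h2.trans h3
  -- final contradiction
  have hrinv : r⁻¹ = 2 / (2:ℝ)^j := by rw [hr, inv_div]
  have hexp : Real.exp x₀ = Real.exp ((2:ℝ)^j) * Real.exp (1/2) := by
    rw [hx₀, Real.exp_add]
  have hexp2 : Real.exp ((2:ℝ)^j + 1) = Real.exp ((2:ℝ)^j) * Real.exp 1 := by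
    rw [Real.exp_add]
  rw [hexp, hrinv, hMb, hexp2] at h4
  have hP : 0 < Real.exp ((2:ℝ)^j) := Real.exp_pos _
  have he1 : (1:ℝ) ≤ Real.exp (1/2) := Real.one_le_exp (by norm_num)
  have hpow : (0:ℝ) < (2:ℝ)^j := by positivity
  -- h4 : P * exp(1/2) ≤ C' * (2/2^j) * ((j+1) * (P * exp 1))
  have h6 : (2:ℝ)^j ≤ 2 * C' * ((j:ℝ)+1) * Real.exp 1 := by
    have h40 := mul_le_mul_of_nonneg_left h4 hpow.le
    have heq : (2:ℝ)^j * (C' * (2 / (2:ℝ)^j) * (((j:ℝ)+1) * (Real.exp ((2:ℝ)^j) * Real.exp 1)))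
        = 2 * C' * ((j:ℝ)+1) * Real.exp 1 * Real.exp ((2:ℝ)^j) := by
      field_simp
    rw [heq] at h40
    have hA : (2:ℝ)^j * Real.exp ((2:ℝ)^j) ≤
        (2:ℝ)^j * (Real.exp ((2:ℝ)^j) * Real.exp (1/2)) :=
      mul_le_mul_of_nonneg_left (le_mul_of_one_le_right hP.le he1) hpow.le
    exact (mul_le_mul_iff_of_pos_right hP).mp (hA.trans h40)
  have h7 : 2 * C' * ((j:ℝ)+1) * Real.exp 1 ≤ K * ((j:ℝ)+1) := by
    rw [hK]
    have hj0 : (0:ℝ) ≤ (j:ℝ) + 1 := by positivity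
    have he : 0 < Real.exp 1 := Real.exp_pos 1
    nlinarith [mul_nonneg he.le hj0]
  linarith
end
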